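/- Let p, k, q be positive integers with p − 2 ≥ k. The adjacency matrix of the generalized pineapple graph K_{p,k}^q has rank p + 1. -/

import Mathlib

open Matrix Finset

/-- Adjacency matrix of the generalized pineapple graph `K_{p,k}^q`:
vertices `0,…,p-1` form a clique `K_p`, vertices `p,…,p+q-1` are independent,
and each independent vertex is joined to the `k` clique vertices `0,…,k-1`. -/
def pineappleAdj (p k q : ℕ) : Matrix (Fin (p + q)) (Fin (p + q)) ℚ :=
  fun i j =>
    if i = j then 0
    else if (i : ℕ) < p ∧ (j : ℕ) < p then 1
    else if (i : ℕ) < k ∨ (j : ℕ) < k then 1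
    else 0

def pvA (p : ℕ) : Fin (p+1) → ℚ := fun i => if (i:ℕ) < p then 1 else 0
def pvC (p k : ℕ) : Fin (p+1) → ℚ := fun i => if (i:ℕ) < k then 1 else 0
def pvE (p : ℕ) : Fin (p+1) → ℚ := fun i => if (i:ℕ) < p then 0 else 1
def pvW (p k : ℕ) : Fin (p+1) → ℚ :=
  fun i => (k:ℚ) * pvA p i - ((p:ℚ)-1) * pvC p k i - ((p:ℚ)-1) * pvE p i


def pineappleInv (p k : ℕ) : Matrix (Fin (p+1)) (Fin (p+1)) ℚ :=
  ((k:ℚ)*((p:ℚ)-1-(k:ℚ))) • vecMulVec (pvA p) (pvA p)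
  + vecMulVec (pvW p k) (pvW p k)
  + (((p:ℚ)-1)*(k:ℚ)*((p:ℚ)-1-(k:ℚ))) • vecMulVec (pvE p) (pvE p)
  - (((p:ℚ)-1)*(k:ℚ)*((p:ℚ)-1-(k:ℚ))) • 1

lemma vmv_mul {n : ℕ} (x y u v : Fin n → ℚ) :
    vecMulVec x y * vecMulVec u v = (y ⬝ᵥ u) • vecMulVec x v := by
  ext i j
  simp only [Matrix.mul_apply, vecMulVec_apply, Matrix.smul_apply, smul_eq_mul, dotProduct]
  rw [Finset.sum_mul]
  exact Finset.sum_congr rfl fun l _ => by ring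

lemma sum_ind (n m : ℕ) (h : m ≤ n) :
    ∑ i : Fin n, (if (i:ℕ) < m then (1:ℚ) else 0) = m := by
  rw [Fin.sum_univ_eq_sum_range (fun i => if i < m then (1:ℚ) else 0) n, ← Finset.sum_filter]
  have : (Finset.range n).filter (fun i => i < m) = Finset.range m := by ext x; simp; omega
  rw [this, Finset.sum_const, Finset.card_range, nsmul_eq_mul, mul_one]

lemma dot_aa (p : ℕ) : pvA p ⬝ᵥ pvA p = p := by
  unfold dotProduct pvA
  rw [Finset.sum_congr rfl (fun i _ => by split_ifs <;> ring :
    ∀ i ∈ Finset.univ, (if ((i : Fin (p+1)):ℕ) < p then (1:ℚ) else 0) *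
      (if (i:ℕ) < p then 1 else 0) = if (i:ℕ) < p then 1 else 0)]
  exact sum_ind (p+1) p (by omega)

lemma dot_ac (p k : ℕ) (h : k ≤ p) : pvA p ⬝ᵥ pvC p k = k := by
  unfold dotProduct pvA pvC
  rw [Finset.sum_congr rfl (fun i _ => by split_ifs <;> first | ring1 | (exfalso; omega) :
    ∀ i ∈ Finset.univ, (if ((i : Fin (p+1)):ℕ) < p then (1:ℚ) else 0) *
      (if (i:ℕ) < k then 1 else 0) = if (i:ℕ) < k then 1 else 0)]
  exact sum_ind (p+1) k (by omega)

lemma dot_ca (p k : ℕ) (h : k ≤ p) : pvC p k ⬝ᵥ pvA p = k := by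
  unfold dotProduct pvA pvC
  rw [Finset.sum_congr rfl (fun i _ => by split_ifs <;> first | ring1 | (exfalso; omega) :
    ∀ i ∈ Finset.univ, (if ((i : Fin (p+1)):ℕ) < k then (1:ℚ) else 0) *
      (if (i:ℕ) < p then 1 else 0) = if (i:ℕ) < k then 1 else 0)]
  exact sum_ind (p+1) k (by omega)

lemma dot_cc (p k : ℕ) (h : k ≤ p) : pvC p k ⬝ᵥ pvC p k = k := by
  unfold dotProduct pvC
  rw [Finset.sum_congr rfl (fun i _ => by split_ifs <;> ring :
    ∀ i ∈ Finset.univ, (if ((i : Fin (p+1)):ℕ) < k then (1:ℚ) else 0) *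
      (if (i:ℕ) < k then 1 else 0) = if (i:ℕ) < k then 1 else 0)]
  exact sum_ind (p+1) k (by omega)

lemma dot_ae (p : ℕ) : pvA p ⬝ᵥ pvE p = 0 := by
  unfold dotProduct pvA pvE
  exact Finset.sum_eq_zero fun i _ => by split_ifs <;> ring

lemma dot_ea (p : ℕ) : pvE p ⬝ᵥ pvA p = 0 := by
  unfold dotProduct pvA pvE
  exact Finset.sum_eq_zero fun i _ => by split_ifs <;> ring

lemma dot_ce (p k : ℕ) (h : k ≤ p) : pvC p k ⬝ᵥ pvE p = 0 := by
  unfold dotProduct pvC pvE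
  exact Finset.sum_eq_zero fun i _ => by split_ifs <;> first | ring1 | (exfalso; omega)

lemma dot_ec (p k : ℕ) (h : k ≤ p) : pvE p ⬝ᵥ pvC p k = 0 := by
  unfold dotProduct pvC pvE
  exact Finset.sum_eq_zero fun i _ => by split_ifs <;> first | ring1 | (exfalso; omega)

lemma dot_ee (p : ℕ) : pvE p ⬝ᵥ pvE p = 1 := by
  unfold dotProduct pvE
  have h1 : ∀ i ∈ (Finset.univ : Finset (Fin (p+1))),
      (if (i:ℕ) < p then (0:ℚ) else 1) * (if (i:ℕ) < p then 0 else 1)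
      = 1 - (if (i:ℕ) < p then 1 else 0) := fun i _ => by split_ifs <;> ring
  rw [Finset.sum_congr rfl h1, Finset.sum_sub_distrib, Finset.sum_const,
    sum_ind (p+1) p (by omega), Finset.card_univ, Fintype.card_fin, nsmul_eq_mul, mul_one]
  push_cast; ring

lemma pineapple_one_eq (p k : ℕ) (h2 : k + 2 ≤ p) :
    pineappleAdj p k 1 =
      vecMulVec (pvA p) (pvA p) + vecMulVec (pvC p k) (pvE p)
      + vecMulVec (pvE p) (pvC p k) + vecMulVec (pvE p) (pvE p) - 1 := by
  ext i j
  have hi := i.isLt; have hj := j.isLt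
  simp only [pineappleAdj, Matrix.sub_apply, Matrix.add_apply, vecMulVec_apply,
    Matrix.one_apply, Fin.ext_iff, pvA, pvC, pvE]
  split_ifs <;> first | ring1 | (exfalso; omega)

set_option maxHeartbeats 2000000 in
lemma pineapple_mul_inv (p k : ℕ) (hk : 0 < k) (h2 : k + 2 ≤ p) :
    pineappleAdj p k 1 * pineappleInv p k
      = (((p:ℚ)-1)*(k:ℚ)*((p:ℚ)-1-(k:ℚ))) • 1 := by
  have hkp : k ≤ p := by omega
  have hw : pvW p k = (k:ℚ) • pvA p - ((p:ℚ)-1) • pvC p k - ((p:ℚ)-1) • pvE p := by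
    funext i; simp [pvW, Pi.sub_apply, Pi.smul_apply, smul_eq_mul]
  have daw : pvA p ⬝ᵥ pvW p k = (k:ℚ)*(p:ℚ) - ((p:ℚ)-1)*(k:ℚ) := by
    rw [hw]; simp [dotProduct_sub, dotProduct_smul, dot_aa, dot_ac p k hkp, dot_ae,
      smul_eq_mul]
  have dcw : pvC p k ⬝ᵥ pvW p k = (k:ℚ)*(k:ℚ) - ((p:ℚ)-1)*(k:ℚ) := by
    rw [hw]; simp [dotProduct_sub, dotProduct_smul, dot_ca p k hkp, dot_cc p k hkp,
      dot_ce p k hkp, smul_eq_mul] <;> ring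
  have dew : pvE p ⬝ᵥ pvW p k = -((p:ℚ)-1) := by
    rw [hw]; simp [dotProduct_sub, dotProduct_smul, dot_ea, dot_ec p k hkp, dot_ee,
      smul_eq_mul]
  rw [pineapple_one_eq p k h2]
  unfold pineappleInv
  simp only [add_mul, sub_mul, mul_add, mul_sub, one_mul, mul_one,
    Matrix.smul_mul, Matrix.mul_smul, vmv_mul, smul_smul,
    dot_aa, dot_ac p k hkp, dot_ca p k hkp, dot_cc p k hkp, dot_ae, dot_ea,
    dot_ce p k hkp, dot_ec p k hkp, dot_ee, daw, dcw, dew,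
    zero_smul, one_smul, smul_zero, add_zero, zero_add, sub_zero, zero_sub]
  ext i j
  have hi := i.isLt; have hj := j.isLt
  simp only [Matrix.add_apply, Matrix.sub_apply, Matrix.smul_apply, Matrix.one_apply,
    Matrix.neg_apply, vecMulVec_apply, pvW, pvA, pvC, pvE, smul_eq_mul, Fin.ext_iff]
  split_ifs <;> first | (exfalso; omega) | ring1

lemma rank_submatrix_le' {m n : ℕ} (X : Matrix (Fin n) (Fin n) ℚ) (f : Fin m → Fin n) :
    (X.submatrix f f).rank ≤ X.rank := by
  have h : X.submatrix f f =
      (Matrix.of fun i l => if f i = l then (1:ℚ) else 0) * X *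
      (Matrix.of fun l j => if f j = l then (1:ℚ) else 0) := by
    ext i j
    simp [Matrix.mul_apply, ite_mul, mul_ite, Finset.sum_ite_eq, Finset.sum_ite_eq']
  rw [h]
  exact le_trans (Matrix.rank_mul_le_left _ _) (Matrix.rank_mul_le_right _ _)

/-- The adjacency matrix of `K_{p,k}^q` has rank `p + 1`. -/
theorem rank_pineappleAdj (p k q : ℕ) (hk : 0 < k) (hq : 0 < q)
    (hpk : k ≤ p - 2) (hp : 0 < p) :
    (pineappleAdj p k q).rank = p + 1 := by
  have hk2 : k + 2 ≤ p := by omega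
  have hc : ((p:ℚ)-1)*(k:ℚ)*((p:ℚ)-1-(k:ℚ)) ≠ 0 := by
    have h3 : (3:ℚ) ≤ (p:ℚ) := by exact_mod_cast (by omega : 3 ≤ p)
    have hk0 : (1:ℚ) ≤ (k:ℚ) := by exact_mod_cast hk
    have hkp : (k:ℚ) + 2 ≤ (p:ℚ) := by exact_mod_cast hk2
    have n1 : (p:ℚ) - 1 ≠ 0 := by intro h; linarith
    have n2 : (k:ℚ) ≠ 0 := by intro h; linarith
    have n3 : (p:ℚ) - 1 - (k:ℚ) ≠ 0 := by intro h; linarith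
    exact mul_ne_zero (mul_ne_zero n1 n2) n3
  have hMN : pineappleAdj p k 1 *
      ((((p:ℚ)-1)*(k:ℚ)*((p:ℚ)-1-(k:ℚ)))⁻¹ • pineappleInv p k) = 1 := by
    rw [Matrix.mul_smul, pineapple_mul_inv p k hk hk2, smul_smul, inv_mul_cancel₀ hc, one_smul]
  have hu : IsUnit (pineappleAdj p k 1) := (Matrix.isUnit_iff_isUnit_det _).mpr (Matrix.isUnit_det_of_right_inverse hMN)
  have hM : (pineappleAdj p k 1).rank = p + 1 := by
    rw [Matrix.rank_of_isUnit _ hu, Fintype.card_fin]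
  have hq1 : p + 1 ≤ p + q := by omega
  have e1 : pineappleAdj p k q = (pineappleAdj p k 1).submatrix
      (fun i : Fin (p+q) => (⟨min (i:ℕ) p, by omega⟩ : Fin (p+1)))
      (fun i : Fin (p+q) => (⟨min (i:ℕ) p, by omega⟩ : Fin (p+1))) := by
    ext i j
    have hi := i.isLt; have hj := j.isLt
    simp only [pineappleAdj, Matrix.submatrix_apply, Fin.ext_iff]
    split_ifs <;> first | rfl | (exfalso; omega)
  have e2 : pineappleAdj p k 1 = (pineappleAdj p k q).submatrix
      (Fin.castLE hq1) (Fin.castLE hq1) := by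
    ext i j
    have hi := i.isLt; have hj := j.isLt
    simp only [pineappleAdj, Matrix.submatrix_apply, Fin.ext_iff, Fin.coe_castLE]
    all_goals split_ifs <;> first | rfl | (exfalso; omega)
  refine le_antisymm ?_ ?_
  · rw [e1]
    exact le_trans (rank_submatrix_le' _ _) (le_of_eq hM)
  · rw [← hM, e2]
    exact rank_submatrix_le' _ _
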